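/- Let Φ₁,...,Φ_m : ℝ → ℝ each be l-Lipschitz, let σ₁,...,σ_m be independent Rademacher random variables, and let H be a set of real-valued functions on X with sample points x₁,...,x_m. Then (1/m)·E_σ[ sup_{h∈H} Σᵢ σᵢ Φᵢ(h(xᵢ)) ] ≤ (l/m)·E_σ[ sup_{h∈H} Σᵢ σᵢ h(xᵢ) ]. -/

import Mathlib

open Finset

namespace TalagrandAux

def ε (b : Bool) : ℝ := if b then 1 else -1

lemma eps_not (b : Bool) : ε (!b) = - ε b := by cases b <;> simp [ε]

lemma bdd_add {Y : Type*} {H : Set Y} {p q : Y → ℝ}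
    (hp : BddAbove (p '' H)) (hq : BddAbove (q '' H)) :
    BddAbove ((fun h => p h + q h) '' H) := by
  obtain ⟨M, hM⟩ := hp
  obtain ⟨N, hN⟩ := hq
  refine ⟨M + N, ?_⟩
  rintro _ ⟨h, hh, rfl⟩
  exact add_le_add (hM ⟨h, hh, rfl⟩) (hN ⟨h, hh, rfl⟩)

lemma bdd_mul {Y : Type*} {H : Set Y} {p : Y → ℝ} {c : ℝ} (hc : 0 ≤ c)
    (hp : BddAbove (p '' H)) :
    BddAbove ((fun h => c * p h) '' H) := by
  obtain ⟨M, hM⟩ := hp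
  refine ⟨c * M, ?_⟩
  rintro _ ⟨h, hh, rfl⟩
  exact mul_le_mul_of_nonneg_left (hM ⟨h, hh, rfl⟩) hc

/-- The key one-coordinate contraction inequality. -/
lemma key {Y : Type*} {H : Set Y} (hne : H.Nonempty) (a g : Y → ℝ) (l : ℝ)
    (φ : ℝ → ℝ) (hφ : ∀ u v : ℝ, |φ u - φ v| ≤ l * |u - v|)
    (b3 : BddAbove ((fun h => a h + l * g h) '' H))
    (b4 : BddAbove ((fun h => a h - l * g h) '' H)) :
    sSup ((fun h => a h + φ (g h)) '' H) + sSup ((fun h => a h - φ (g h)) '' H)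
      ≤ sSup ((fun h => a h + l * g h) '' H) + sSup ((fun h => a h - l * g h) '' H) := by
  set R : ℝ := sSup ((fun h => a h + l * g h) '' H) + sSup ((fun h => a h - l * g h) '' H)
    with hR
  have main : ∀ h1 ∈ H, ∀ h2 ∈ H,
      (a h1 + φ (g h1)) + (a h2 - φ (g h2)) ≤ R := by
    intro h1 hh1 h2 hh2
    have hb : φ (g h1) - φ (g h2) ≤ l * |g h1 - g h2| :=
      (le_abs_self _).trans (hφ _ _)
    have h3a : a h1 + l * g h1 ≤ sSup ((fun h => a h + l * g h) '' H) :=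
      le_csSup b3 ⟨h1, hh1, rfl⟩
    have h3b : a h2 + l * g h2 ≤ sSup ((fun h => a h + l * g h) '' H) :=
      le_csSup b3 ⟨h2, hh2, rfl⟩
    have h4a : a h1 - l * g h1 ≤ sSup ((fun h => a h - l * g h) '' H) :=
      le_csSup b4 ⟨h1, hh1, rfl⟩
    have h4b : a h2 - l * g h2 ≤ sSup ((fun h => a h - l * g h) '' H) :=
      le_csSup b4 ⟨h2, hh2, rfl⟩
    rcases le_total (g h2) (g h1) with hc | hc
    · rw [abs_of_nonneg (sub_nonneg.mpr hc)] at hb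
      have := add_le_add h3a h4b
      nlinarith [this]
    · rw [abs_of_nonpos (sub_nonpos.mpr hc), neg_sub] at hb
      have := add_le_add h3b h4a
      nlinarith [this]
  have h1 : sSup ((fun h => a h + φ (g h)) '' H)
      ≤ R - sSup ((fun h => a h - φ (g h)) '' H) := by
    apply csSup_le (hne.image _)
    rintro _ ⟨h1, hh1, rfl⟩
    show a h1 + φ (g h1) ≤ _
    have h2 : sSup ((fun h => a h - φ (g h)) '' H) ≤ R - (a h1 + φ (g h1)) := by
      apply csSup_le (hne.image _)
      rintro _ ⟨h2, hh2, rfl⟩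
      show a h2 - φ (g h2) ≤ _
      have := main h1 hh1 h2 hh2
      linarith
    linarith
  linarith

section Main

variable {X : Type*} (m : ℕ) (x : Fin m → X) (H : Set (X → ℝ))
  (Φ : Fin m → ℝ → ℝ) (l : ℝ)

/-- Mixed signed sum: coordinates in `s` use `l • h`, others use `Φ`. -/
def f (s : Finset (Fin m)) (σ : Fin m → Bool) (h : X → ℝ) : ℝ :=
  ∑ i, ε (σ i) * (if i ∈ s then l * h (x i) else Φ i (h (x i)))

noncomputable def A (s : Finset (Fin m)) : ℝ :=
  ∑ σ : Fin m → Bool, sSup (f m x Φ l s σ '' H)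

lemma bdd_f (hl : 0 ≤ l)
    (hbdd : ∀ σ : Fin m → Bool, BddAbove ((fun h : X → ℝ =>
      ∑ i, ε (σ i) * h (x i)) '' H))
    (hbddΦ : ∀ σ : Fin m → Bool, BddAbove ((fun h : X → ℝ =>
      ∑ i, ε (σ i) * Φ i (h (x i))) '' H))
    (s : Finset (Fin m)) (σ : Fin m → Bool) :
    BddAbove (f m x Φ l s σ '' H) := by
  classical
  set σ' : Fin m → Bool := fun i => if i ∈ s then σ i else !σ i with hσ'
  set σ'' : Fin m → Bool := fun i => if i ∈ s then !σ i else σ i with hσ''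
  have hfun : f m x Φ l s σ = fun h =>
      l * ((1/2) * ((∑ i, ε (σ i) * h (x i)) + ∑ i, ε (σ' i) * h (x i)))
      + (1/2) * ((∑ i, ε (σ i) * Φ i (h (x i))) + ∑ i, ε (σ'' i) * Φ i (h (x i))) := by
    funext h
    simp only [f, σ', σ'', mul_add, Finset.mul_sum, ← Finset.sum_add_distrib]
    apply Finset.sum_congr rfl
    intro i _
    by_cases hi : i ∈ s <;> cases hσi : σ i <;> simp [ε, hi, hσi] <;> ring
  rw [hfun]
  apply bdd_add
  · exact bdd_mul hl (bdd_mul (by norm_num) (bdd_add (hbdd σ) (hbdd σ')))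
  · exact bdd_mul (by norm_num) (bdd_add (hbddΦ σ) (hbddΦ σ''))

lemma step (hne : H.Nonempty)
    (hΦ : ∀ i, ∀ a b : ℝ, |Φ i a - Φ i b| ≤ l * |a - b|)
    (hl : 0 ≤ l)
    (hbdd : ∀ σ : Fin m → Bool, BddAbove ((fun h : X → ℝ =>
      ∑ i, ε (σ i) * h (x i)) '' H))
    (hbddΦ : ∀ σ : Fin m → Bool, BddAbove ((fun h : X → ℝ =>
      ∑ i, ε (σ i) * Φ i (h (x i))) '' H))
    {s : Finset (Fin m)} {j : Fin m} (hj : j ∉ s) :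
    A m x H Φ l s ≤ A m x H Φ l (insert j s) := by
  classical
  set flip : (Fin m → Bool) → (Fin m → Bool) :=
    fun σ => Function.update σ j (!σ j) with hflip
  have hinv : Function.Involutive flip := by
    intro σ; funext i
    by_cases hi : i = j
    · subst hi; simp [flip]
    · simp [flip, Function.update_of_ne hi]
  have hkey : ∀ σ : Fin m → Bool,
      sSup (f m x Φ l s σ '' H) + sSup (f m x Φ l s (flip σ) '' H)
        ≤ sSup (f m x Φ l (insert j s) σ '' H)
          + sSup (f m x Φ l (insert j s) (flip σ) '' H) := by
    intro σ
    set a : (X → ℝ) → ℝ := fun h =>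
      ∑ i ∈ univ.erase j, ε (σ i) * (if i ∈ s then l * h (x i) else Φ i (h (x i))) with ha
    set g : (X → ℝ) → ℝ := fun h => h (x j) with hg
    have hfsplit : ∀ τ : Fin m → Bool, (∀ i, i ≠ j → τ i = σ i) →
        f m x Φ l s τ = (fun h => ε (τ j) * Φ j (h (x j)) + a h)
        ∧ f m x Φ l (insert j s) τ = (fun h => ε (τ j) * (l * h (x j)) + a h) := by
      intro τ hτ
      constructor <;> funext h <;>
      · show (∑ i, ε (τ i) * _) = _
        rw [← Finset.add_sum_erase _ _ (mem_univ j)]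
        congr 1
        · simp [hj]
        · apply Finset.sum_congr rfl
          intro i hi
          have hij : i ≠ j := (Finset.mem_erase.mp hi).1
          simp [hτ i hij, Finset.mem_insert, hij]
    have hτself : ∀ i, i ≠ j → σ i = σ i := fun _ _ => rfl
    have hτflip : ∀ i, i ≠ j → flip σ i = σ i := by
      intro i hi; simp [flip, Function.update_of_ne hi]
    obtain ⟨e1, e2⟩ := hfsplit σ hτself
    obtain ⟨e3, e4⟩ := hfsplit (flip σ) hτflip
    have hflipj : flip σ j = !σ j := by simp [flip]
    have b3 : BddAbove ((fun h => a h + l * g h) '' H) := by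
      have : (fun h => a h + l * g h) = f m x Φ l (insert j s) (Function.update σ j true) := by
        have := (hfsplit (Function.update σ j true)
          (fun i hi => Function.update_of_ne hi _ _)).2
        rw [this]
        funext h
        simp [ε, g, add_comm]
      rw [this]
      exact bdd_f m x H Φ l hl hbdd hbddΦ _ _
    have b4 : BddAbove ((fun h => a h - l * g h) '' H) := by
      have : (fun h => a h - l * g h) = f m x Φ l (insert j s) (Function.update σ j false) := by
        have := (hfsplit (Function.update σ j false)
          (fun i hi => Function.update_of_ne hi _ _)).2
        rw [this]
        funext h
        simp [ε, g]
        ring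
      rw [this]
      exact bdd_f m x H Φ l hl hbdd hbddΦ _ _
    have hk := key hne a g l (Φ j) (hΦ j) b3 b4
    rw [e1, e2, e3, e4, hflipj]
    cases hσj : σ j
    · -- σ j = false : ε false = -1
      have r1 : (fun h => ε false * Φ j (h (x j)) + a h) = (fun h => a h - Φ j (g h)) := by
        funext h; simp [ε, g]; ring
      have r2 : (fun h => ε (!false) * Φ j (h (x j)) + a h) = (fun h => a h + Φ j (g h)) := by
        funext h; simp [ε, g]; ring
      have r3 : (fun h => ε false * (l * h (x j)) + a h) = (fun h => a h - l * g h) := by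
        funext h; simp [ε, g]; ring
      have r4 : (fun h => ε (!false) * (l * h (x j)) + a h) = (fun h => a h + l * g h) := by
        funext h; simp [ε, g]; ring
      rw [r1, r2, r3, r4]
      linarith
    · have r1 : (fun h => ε true * Φ j (h (x j)) + a h) = (fun h => a h + Φ j (g h)) := by
        funext h; simp [ε, g]; ring
      have r2 : (fun h => ε (!true) * Φ j (h (x j)) + a h) = (fun h => a h - Φ j (g h)) := by
        funext h; simp [ε, g]; ring
      have r3 : (fun h => ε true * (l * h (x j)) + a h) = (fun h => a h + l * g h) := by
        funext h; simp [ε, g]; ring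
      have r4 : (fun h => ε (!true) * (l * h (x j)) + a h) = (fun h => a h - l * g h) := by
        funext h; simp [ε, g]; ring
      rw [r1, r2, r3, r4]
      linarith
  -- pairing argument
  have hsumflip : ∀ s' : Finset (Fin m),
      (∑ σ : Fin m → Bool, sSup (f m x Φ l s' (flip σ) '' H))
        = ∑ σ : Fin m → Bool, sSup (f m x Φ l s' σ '' H) :=
    fun s' => Fintype.sum_bijective flip hinv.bijective _ _ (fun σ => rfl)
  have hAA : A m x H Φ l s + A m x H Φ l s
      ≤ A m x H Φ l (insert j s) + A m x H Φ l (insert j s) := by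
    have e1 : A m x H Φ l s + A m x H Φ l s
        = ∑ σ : Fin m → Bool, (sSup (f m x Φ l s σ '' H) + sSup (f m x Φ l s (flip σ) '' H)) := by
      unfold A
      rw [Finset.sum_add_distrib]
      congr 1
      exact (hsumflip s).symm
    have e2 : A m x H Φ l (insert j s) + A m x H Φ l (insert j s)
        = ∑ σ : Fin m → Bool, (sSup (f m x Φ l (insert j s) σ '' H)
            + sSup (f m x Φ l (insert j s) (flip σ) '' H)) := by
      unfold A
      rw [Finset.sum_add_distrib]
      congr 1
      exact (hsumflip (insert j s)).symm
    rw [e1, e2]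
    exact Finset.sum_le_sum fun σ _ => hkey σ
  linarith

lemma sSup_mul_image {S : Set ℝ} (hne : S.Nonempty) (hb : BddAbove S) {c : ℝ} (hc : 0 ≤ c) :
    sSup ((fun y => c * y) '' S) = c * sSup S := by
  have hbimg : BddAbove ((fun y => c * y) '' S) := by
    obtain ⟨M, hM⟩ := hb
    exact ⟨c * M, by rintro _ ⟨y, hy, rfl⟩; exact mul_le_mul_of_nonneg_left (hM hy) hc⟩
  rcases eq_or_lt_of_le hc with rfl | hc'
  · apply le_antisymm
    · apply csSup_le (hne.image _)
      rintro _ ⟨y, hy, rfl⟩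
      simp
    · obtain ⟨y, hy⟩ := hne
      have := le_csSup hbimg (Set.mem_image_of_mem _ hy)
      simpa using this
  · apply le_antisymm
    · apply csSup_le (hne.image _)
      rintro _ ⟨y, hy, rfl⟩
      exact mul_le_mul_of_nonneg_left (le_csSup hb hy) hc
    · rw [← le_div_iff₀' hc']
      apply csSup_le hne
      intro y hy
      rw [le_div_iff₀' hc']
      exact le_csSup hbimg ⟨y, hy, rfl⟩

end Main

end TalagrandAux

open TalagrandAux

theorem talagrand_contraction
    {X : Type*} (m : ℕ) (x : Fin m → X) (H : Set (X → ℝ))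
    (Φ : Fin m → ℝ → ℝ) (l : ℝ)
    (hΦ : ∀ i, ∀ a b : ℝ, |Φ i a - Φ i b| ≤ l * |a - b|)
    (hH : H.Nonempty)
    (hbdd : ∀ σ : Fin m → Bool, BddAbove ((fun h : X → ℝ =>
      ∑ i, (if σ i then (1 : ℝ) else -1) * h (x i)) '' H))
    (hbddΦ : ∀ σ : Fin m → Bool, BddAbove ((fun h : X → ℝ =>
      ∑ i, (if σ i then (1 : ℝ) else -1) * Φ i (h (x i))) '' H)) :
    (1 / m : ℝ) * ((1 / 2 ^ m) * ∑ σ : Fin m → Bool,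
        sSup ((fun h : X → ℝ =>
          ∑ i, (if σ i then (1 : ℝ) else -1) * Φ i (h (x i))) '' H))
      ≤ (l / m) * ((1 / 2 ^ m) * ∑ σ : Fin m → Bool,
        sSup ((fun h : X → ℝ =>
          ∑ i, (if σ i then (1 : ℝ) else -1) * h (x i)) '' H)) := by
  classical
  rcases Nat.eq_zero_or_pos m with rfl | hm
  · simp
  have hl : 0 ≤ l := by
    have i0 : Fin m := ⟨0, hm⟩
    have h01 := hΦ i0 0 1
    have : |Φ i0 0 - Φ i0 1| ≤ l := by simpa using h01
    exact le_trans (abs_nonneg _) this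
  have hbdd' : ∀ σ : Fin m → Bool, BddAbove ((fun h : X → ℝ =>
      ∑ i, ε (σ i) * h (x i)) '' H) := hbdd
  have hbddΦ' : ∀ σ : Fin m → Bool, BddAbove ((fun h : X → ℝ =>
      ∑ i, ε (σ i) * Φ i (h (x i))) '' H) := hbddΦ
  have hA : ∀ s : Finset (Fin m), A m x H Φ l ∅ ≤ A m x H Φ l s := by
    intro s
    induction s using Finset.induction_on with
    | empty => exact le_refl _
    | insert _ _ hj ih =>
        exact ih.trans (step m x H Φ l hH hΦ hl hbdd' hbddΦ' hj)
  have hempty : A m x H Φ l ∅ = ∑ σ : Fin m → Bool,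
      sSup ((fun h : X → ℝ => ∑ i, ε (σ i) * Φ i (h (x i))) '' H) := by
    unfold A
    refine Finset.sum_congr rfl fun σ _ => ?_
    have : f m x Φ l (∅ : Finset (Fin m)) σ
        = fun h : X → ℝ => ∑ i, ε (σ i) * Φ i (h (x i)) := by
      funext h
      simp [f]
    rw [this]
  have huniv : A m x H Φ l Finset.univ = l * ∑ σ : Fin m → Bool,
      sSup ((fun h : X → ℝ => ∑ i, ε (σ i) * h (x i)) '' H) := by
    unfold A
    rw [Finset.mul_sum]
    apply Finset.sum_congr rfl
    intro σ _
    have himg : f m x Φ l Finset.univ σ '' H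
        = (fun y => l * y) '' ((fun h : X → ℝ => ∑ i, ε (σ i) * h (x i)) '' H) := by
      rw [Set.image_image]
      have : f m x Φ l (Finset.univ : Finset (Fin m)) σ
          = fun h : X → ℝ => l * ∑ i, ε (σ i) * h (x i) := by
        funext h
        simp only [f, Finset.mem_univ, if_pos, Finset.mul_sum]
        exact Finset.sum_congr rfl fun i _ => by ring
      rw [this]
    rw [himg, sSup_mul_image (hH.image _) (hbdd' σ) hl]
  have hmain : A m x H Φ l ∅ ≤ l * ∑ σ : Fin m → Bool,
      sSup ((fun h : X → ℝ => ∑ i, ε (σ i) * h (x i)) '' H) :=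
    huniv ▸ hA Finset.univ
  rw [hempty] at hmain
  have c_nonneg : (0:ℝ) ≤ (1/m) * (1/2^m) := by positivity
  have final : (1 / m : ℝ) * ((1 / 2 ^ m) * ∑ σ : Fin m → Bool,
        sSup ((fun h : X → ℝ => ∑ i, ε (σ i) * Φ i (h (x i))) '' H))
      ≤ (l / m) * ((1 / 2 ^ m) * ∑ σ : Fin m → Bool,
        sSup ((fun h : X → ℝ => ∑ i, ε (σ i) * h (x i)) '' H)) := by
    calc (1 / m : ℝ) * ((1 / 2 ^ m) * ∑ σ : Fin m → Bool,
        sSup ((fun h : X → ℝ => ∑ i, ε (σ i) * Φ i (h (x i))) '' H))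
        = ((1/m) * (1/2^m)) * ∑ σ : Fin m → Bool,
            sSup ((fun h : X → ℝ => ∑ i, ε (σ i) * Φ i (h (x i))) '' H) := by ring
      _ ≤ ((1/m) * (1/2^m)) * (l * ∑ σ : Fin m → Bool,
            sSup ((fun h : X → ℝ => ∑ i, ε (σ i) * h (x i)) '' H)) :=
          mul_le_mul_of_nonneg_left hmain c_nonneg
      _ = (l / m) * ((1 / 2 ^ m) * ∑ σ : Fin m → Bool,
            sSup ((fun h : X → ℝ => ∑ i, ε (σ i) * h (x i)) '' H)) := by ring
  exact final
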